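/- For any two probability measures ρ and ρ₀ on ℝⁿ with finite second moments, means μ, μ₀ and covariances S, P₀ ≻ 0, one has W₂²(ρ, ρ₀) ≥ ‖μ − μ₀‖² + tr(S + P₀ − 2(P₀^{1/2} S P₀^{1/2})^{1/2}). -/

import Mathlib

open Matrix MeasureTheory

/-- Squared Wasserstein-2 distance between probability measures on `ℝⁿ`,
defined as the infimum of `E‖x - y‖²` over couplings. -/
noncomputable def W2sq {n : ℕ} (ρ ρ₀ : Measure (Fin n → ℝ)) : ℝ :=
  sInf {r : ℝ | ∃ π : Measure ((Fin n → ℝ) × (Fin n → ℝ)),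
    π.map Prod.fst = ρ ∧ π.map Prod.snd = ρ₀ ∧
    r = ∫ p, (p.1 - p.2) ⬝ᵥ (p.1 - p.2) ∂π}

open scoped ComplexOrder in
/-- The positive semidefinite square root, as defined in the older Mathlib
(removed from current Mathlib). -/
noncomputable def Matrix.PosSemidef.sqrt {m 𝕜 : Type*} [Fintype m] [DecidableEq m] [RCLike 𝕜]
    {A : Matrix m m 𝕜} (hA : A.PosSemidef) : Matrix m m 𝕜 :=
  hA.1.eigenvectorUnitary.1 * diagonal ((↑) ∘ (√·) ∘ hA.1.eigenvalues) *
    (star hA.1.eigenvectorUnitary : Matrix m m 𝕜)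

lemma symm_dot {n : ℕ} (A : Matrix (Fin n) (Fin n) ℝ) (hA : Aᵀ = A) (x y : Fin n → ℝ) :
    (A *ᵥ x) ⬝ᵥ y = x ⬝ᵥ (A *ᵥ y) := by
  nth_rewrite 1 [← hA]
  rw [Matrix.mulVec_transpose, ← Matrix.dotProduct_mulVec]

lemma quadIneq {n : ℕ} {K : Matrix (Fin n) (Fin n) ℝ} (hK : K.PosDef) (a b : Fin n → ℝ) :
    2 * (a ⬝ᵥ b) ≤ a ⬝ᵥ (K *ᵥ a) + b ⬝ᵥ (K⁻¹ *ᵥ b) := by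
  have hdet : IsUnit K.det := hK.det_pos.ne'.isUnit
  have hKs : Kᵀ = K := hK.isHermitian
  have hKinvs : (K⁻¹)ᵀ = K⁻¹ := (Matrix.transpose_nonsing_inv K) ▸ congrArg Inv.inv hKs
  have h := hK.posSemidef.dotProduct_mulVec_nonneg (a - K⁻¹ *ᵥ b)
  rw [star_trivial] at h
  have key : (a - K⁻¹ *ᵥ b) ⬝ᵥ K *ᵥ (a - K⁻¹ *ᵥ b)
      = a ⬝ᵥ (K *ᵥ a) + b ⬝ᵥ (K⁻¹ *ᵥ b) - 2 * (a ⬝ᵥ b) := by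
    have h1 : ∀ z : Fin n → ℝ, (K⁻¹ *ᵥ b) ⬝ᵥ z = b ⬝ᵥ (K⁻¹ *ᵥ z) := fun z =>
      symm_dot _ hKinvs b z
    have h2 : K *ᵥ (K⁻¹ *ᵥ b) = b := by
      rw [Matrix.mulVec_mulVec, Matrix.mul_nonsing_inv _ hdet, Matrix.one_mulVec]
    have h3 : K⁻¹ *ᵥ (K *ᵥ a) = a := by
      rw [Matrix.mulVec_mulVec, Matrix.nonsing_inv_mul _ hdet, Matrix.one_mulVec]
    rw [Matrix.mulVec_sub, sub_dotProduct, dotProduct_sub,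
      dotProduct_sub, h1, h1, h2, h3]
    rw [dotProduct_comm b a]
    ring
  linarith [h, key ▸ h]

lemma posDef_of_psd_det {n : ℕ} {A : Matrix (Fin n) (Fin n) ℝ} (hA : A.PosSemidef)
    (h : A.det ≠ 0) : A.PosDef := by
  refine PosDef.of_dotProduct_mulVec_pos hA.1 fun x hx => ?_
  have h0 := hA.dotProduct_mulVec_nonneg x
  rcases eq_or_lt_of_le h0 with he | hl
  · exfalso
    have hz : A *ᵥ x = 0 := (hA.dotProduct_mulVec_zero_iff x).mp he.symm
    have hinj := Matrix.mulVec_injective_iff_isUnit.mpr ((Matrix.isUnit_iff_isUnit_det A).mpr h.isUnit)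
    exact hx (hinj (by simpa using hz))
  · exact hl

lemma congPD {n : ℕ} {B Q : Matrix (Fin n) (Fin n) ℝ} (hB : B.PosDef) (hQs : Qᵀ = Q)
    (hQdet : IsUnit Q.det) : (Q * B * Q).PosDef := by
  refine PosDef.of_dotProduct_mulVec_pos ?_ fun x hx => ?_
  · show (Q * B * Q)ᵀ = Q * B * Q
    have hBs : Bᵀ = B := hB.isHermitian
    rw [Matrix.transpose_mul, Matrix.transpose_mul, hQs, hBs, ← Matrix.mul_assoc]
  · have hq : Q *ᵥ x ≠ 0 := by
      intro hc
      exact hx (Matrix.mulVec_injective_iff_isUnit.mpr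
        ((Matrix.isUnit_iff_isUnit_det Q).mpr hQdet) (by simpa using hc))
    have := hB.dotProduct_mulVec_pos hq
    rw [star_trivial] at this ⊢
    calc 0 < (Q *ᵥ x) ⬝ᵥ (B *ᵥ (Q *ᵥ x)) := this
    _ = x ⬝ᵥ ((Q * B * Q) *ᵥ x) := by
        rw [symm_dot Q hQs, Matrix.mulVec_mulVec, Matrix.mulVec_mulVec, Matrix.mul_assoc]

lemma Matrix.PosSemidef.posSemidef_sqrt {m : Type*} [Fintype m] [DecidableEq m]
    {A : Matrix m m ℝ} (hA : A.PosSemidef) : hA.sqrt.PosSemidef := by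
  unfold Matrix.PosSemidef.sqrt
  exact (posSemidef_diagonal_iff.mpr fun i => by simp [Real.sqrt_nonneg]).mul_mul_conjTranspose_same
    (hA.1.eigenvectorUnitary : Matrix m m ℝ)

lemma Matrix.PosSemidef.sqrt_mul_self {m : Type*} [Fintype m] [DecidableEq m]
    {A : Matrix m m ℝ} (hA : A.PosSemidef) : hA.sqrt * hA.sqrt = A := by
  unfold Matrix.PosSemidef.sqrt
  have hspec := hA.1.spectral_theorem
  rw [Unitary.conjStarAlgAut_apply] at hspec
  have hUU : (star hA.1.eigenvectorUnitary : Matrix m m ℝ) * (hA.1.eigenvectorUnitary : Matrix m m ℝ) = 1 :=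
    Unitary.coe_star_mul_self _
  have hDD : diagonal ((RCLike.ofReal : ℝ → ℝ) ∘ (√·) ∘ hA.1.eigenvalues) * diagonal ((RCLike.ofReal : ℝ → ℝ) ∘ (√·) ∘ hA.1.eigenvalues)
      = (diagonal (RCLike.ofReal ∘ hA.1.eigenvalues) : Matrix m m ℝ) := by
    rw [diagonal_mul_diagonal]
    congr 1
    funext i
    simp [Real.mul_self_sqrt (hA.eigenvalues_nonneg i)]
  rw [← hDD] at hspec
  conv_rhs => rw [hspec]
  simp only [Matrix.mul_assoc]
  rw [← Matrix.mul_assoc (star hA.1.eigenvectorUnitary : Matrix m m ℝ) (hA.1.eigenvectorUnitary : Matrix m m ℝ), hUU, Matrix.one_mul]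

lemma gelbrich_matrix {n : ℕ} {S P₀ : Matrix (Fin n) (Fin n) ℝ} (hS : S.PosDef) (hP₀ : P₀.PosDef)
    (hmid : (hP₀.posSemidef.sqrt * S * hP₀.posSemidef.sqrt).PosSemidef) :
    ∃ K : Matrix (Fin n) (Fin n) ℝ, K.PosDef ∧
      (K * S).trace = hmid.sqrt.trace ∧ (K⁻¹ * P₀).trace = hmid.sqrt.trace := by
  set Q := hP₀.posSemidef.sqrt with hQdef
  have hQpsd : Q.PosSemidef := hP₀.posSemidef.posSemidef_sqrt
  have hQs : Qᵀ = Q := hQpsd.1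
  have hQQ : Q * Q = P₀ := hP₀.posSemidef.sqrt_mul_self
  have hQdet : IsUnit Q.det := by
    rw [isUnit_iff_ne_zero]
    intro hc
    have : P₀.det = 0 := by rw [← hQQ, Matrix.det_mul, hc, mul_zero]
    exact hP₀.det_pos.ne' this
  have hMpd : (Q * S * Q).PosDef := congPD hS hQs hQdet
  set N := hmid.sqrt with hNdef
  have hNpsd : N.PosSemidef := hmid.posSemidef_sqrt
  have hNN : N * N = Q * S * Q := hmid.sqrt_mul_self
  have hNdet : IsUnit N.det := by
    rw [isUnit_iff_ne_zero]
    intro hc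
    have : (Q * S * Q).det = 0 := by rw [← hNN, Matrix.det_mul, hc, mul_zero]
    exact hMpd.det_pos.ne' this
  have hNpd : N.PosDef := posDef_of_psd_det hNpsd (isUnit_iff_ne_zero.mp hNdet)
  refine ⟨Q * N⁻¹ * Q, congPD hNpd.inv hQs hQdet, ?_, ?_⟩
  · rw [Matrix.mul_assoc (Q * N⁻¹) Q S, Matrix.trace_mul_comm, ← Matrix.mul_assoc,
      ← hNN, Matrix.mul_nonsing_inv_cancel_right _ _ hNdet]
  · have hKinv : (Q * N⁻¹ * Q)⁻¹ = Q⁻¹ * N * Q⁻¹ := by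
      apply Matrix.inv_eq_right_inv
      simp only [Matrix.mul_assoc]
      rw [Matrix.mul_nonsing_inv_cancel_left _ _ hQdet,
        Matrix.nonsing_inv_mul_cancel_left _ _ hNdet, Matrix.mul_nonsing_inv _ hQdet]
    rw [hKinv, ← hQQ, Matrix.mul_assoc (Q⁻¹ * N) Q⁻¹ _, Matrix.nonsing_inv_mul_cancel_left _ _ hQdet,
      Matrix.mul_assoc, Matrix.trace_mul_comm, Matrix.mul_nonsing_inv_cancel_right _ _ hQdet]

lemma sq_le_dot {n : ℕ} (x : Fin n → ℝ) (i : Fin n) : x i * x i ≤ x ⬝ᵥ x := by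
  simpa [dotProduct] using
    Finset.single_le_sum (f := fun j => x j * x j) (fun j _ => mul_self_nonneg _)
      (Finset.mem_univ i)

lemma int_sub_mul {n : ℕ} (ρ : Measure (Fin n → ℝ)) [IsProbabilityMeasure ρ]
    (h2 : Integrable (fun x => x ⬝ᵥ x) ρ) (a : Fin n → ℝ) (i j : Fin n) :
    Integrable (fun x => (x i - a i) * (x j - a j)) ρ := by
  refine Integrable.mono' ((h2.const_mul 2).add (integrable_const (a i ^ 2 + a j ^ 2)))
    ((((continuous_apply i).sub continuous_const).mul
      ((continuous_apply j).sub continuous_const)).aestronglyMeasurable)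
    (Filter.Eventually.of_forall fun x => ?_)
  simp only [Pi.add_apply]
  rw [Real.norm_eq_abs, abs_mul]
  nlinarith [abs_mul_abs_self (x i - a i), abs_mul_abs_self (x j - a j),
    abs_nonneg (x i - a i), abs_nonneg (x j - a j), sq_le_dot x i, sq_le_dot x j,
    sq_nonneg (|x i - a i| - |x j - a j|), sq_nonneg (x i + a i), sq_nonneg (x j + a j)]

lemma int_coord {n : ℕ} (ρ : Measure (Fin n → ℝ)) [IsProbabilityMeasure ρ]
    (h2 : Integrable (fun x => x ⬝ᵥ x) ρ) (i : Fin n) :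
    Integrable (fun x => x i) ρ := by
  refine Integrable.mono' (h2.add (integrable_const 1))
    ((continuous_apply i).aestronglyMeasurable)
    (Filter.Eventually.of_forall fun x => ?_)
  simp only [Pi.add_apply]
  rw [Real.norm_eq_abs]
  nlinarith [sq_le_dot x i, abs_mul_abs_self (x i), abs_nonneg (x i), sq_nonneg (|x i| - 1)]

lemma pt_ineq {n : ℕ} {K : Matrix (Fin n) (Fin n) ℝ} (hK : K.PosDef) (u v c : Fin n → ℝ) :
    (u ⬝ᵥ u - u ⬝ᵥ (K *ᵥ u)) + (v ⬝ᵥ v - v ⬝ᵥ (K⁻¹ *ᵥ v)) + 2 * (c ⬝ᵥ u) - 2 * (c ⬝ᵥ v) + c ⬝ᵥ c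
      ≤ (u - v + c) ⬝ᵥ (u - v + c) := by
  have hq := quadIneq hK u v
  have hexp : (u - v + c) ⬝ᵥ (u - v + c)
      = u ⬝ᵥ u - 2 * (u ⬝ᵥ v) + v ⬝ᵥ v + 2 * (c ⬝ᵥ u) - 2 * (c ⬝ᵥ v) + c ⬝ᵥ c := by
    simp only [add_dotProduct, sub_dotProduct, dotProduct_add,
      dotProduct_sub]
    rw [dotProduct_comm u c, dotProduct_comm v c, dotProduct_comm v u]
    ring
  rw [hexp]
  linarith



/-- Gelbrich bound: for probability measures `ρ, ρ₀` with finite second moments, means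
`μ, μ₀` and positive definite covariances `S, P₀`,
`W₂²(ρ, ρ₀) ≥ ‖μ − μ₀‖² + tr(S + P₀ − 2(P₀^{1/2} S P₀^{1/2})^{1/2})`. -/
theorem stmt6 {n : ℕ} (ρ ρ₀ : Measure (Fin n → ℝ))
    [IsProbabilityMeasure ρ] [IsProbabilityMeasure ρ₀]
    (h2 : Integrable (fun x => x ⬝ᵥ x) ρ) (h2₀ : Integrable (fun x => x ⬝ᵥ x) ρ₀)
    (μ μ₀ : Fin n → ℝ) (S P₀ : Matrix (Fin n) (Fin n) ℝ)
    (hμ : ∀ i, μ i = ∫ x, x i ∂ρ) (hμ₀ : ∀ i, μ₀ i = ∫ x, x i ∂ρ₀)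
    (hScov : ∀ i j, S i j = ∫ x, (x i - μ i) * (x j - μ j) ∂ρ)
    (hP₀cov : ∀ i j, P₀ i j = ∫ x, (x i - μ₀ i) * (x j - μ₀ j) ∂ρ₀)
    (hS : S.PosDef) (hP₀ : P₀.PosDef)
    (hmid : (hP₀.posSemidef.sqrt * S * hP₀.posSemidef.sqrt).PosSemidef) :
    W2sq ρ ρ₀ ≥ (μ - μ₀) ⬝ᵥ (μ - μ₀) + (S + P₀ - (2 : ℝ) • hmid.sqrt).trace := by
  obtain ⟨K, hKpd, htr1, htr2⟩ := gelbrich_matrix hS hP₀ hmid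
  have hSsymm : ∀ i j, S j i = S i j := by
    intro i j
    rw [hScov, hScov]
    apply integral_congr_ae
    exact Filter.Eventually.of_forall fun x => by ring
  have hPsymm : ∀ i j, P₀ j i = P₀ i j := by
    intro i j
    rw [hP₀cov, hP₀cov]
    apply integral_congr_ae
    exact Filter.Eventually.of_forall fun x => by ring
  rw [ge_iff_le, W2sq]
  apply le_csInf
  · exact ⟨_, ρ.prod ρ₀, by simp [Measure.map_fst_prod], by simp [Measure.map_snd_prod], rfl⟩
  · rintro r ⟨π, hfst, hsnd, rfl⟩
    have hprob : IsProbabilityMeasure π := by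
      constructor
      have h := congrArg (fun m : Measure (Fin n → ℝ) => m Set.univ) hfst
      simp only [Measure.map_apply measurable_fst MeasurableSet.univ, Set.preimage_univ,
        measure_univ] at h
      exact h
    -- transfer lemmas
    have T1 : ∀ f : (Fin n → ℝ) → ℝ, Integrable f ρ →
        Integrable (fun p : (Fin n → ℝ) × (Fin n → ℝ) => f p.1) π ∧
          ∫ p, f p.1 ∂π = ∫ x, f x ∂ρ := by
      intro f hf
      rw [← hfst] at hf ⊢
      exact ⟨(integrable_map_measure hf.aestronglyMeasurable measurable_fst.aemeasurable).mp hf,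
        (integral_map measurable_fst.aemeasurable hf.aestronglyMeasurable).symm⟩
    have T2 : ∀ f : (Fin n → ℝ) → ℝ, Integrable f ρ₀ →
        Integrable (fun p : (Fin n → ℝ) × (Fin n → ℝ) => f p.2) π ∧
          ∫ p, f p.2 ∂π = ∫ x, f x ∂ρ₀ := by
      intro f hf
      rw [← hsnd] at hf ⊢
      exact ⟨(integrable_map_measure hf.aestronglyMeasurable measurable_snd.aemeasurable).mp hf,
        (integral_map measurable_snd.aemeasurable hf.aestronglyMeasurable).symm⟩
    -- componentwise facts
    have hUij : ∀ i j, Integrable (fun p : (Fin n → ℝ) × (Fin n → ℝ) =>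
        (p.1 i - μ i) * (p.1 j - μ j)) π := fun i j => (T1 _ (int_sub_mul ρ h2 μ i j)).1
    have hUval : ∀ i j, ∫ p, (p.1 i - μ i) * (p.1 j - μ j) ∂π = S i j := fun i j => by
      rw [(T1 _ (int_sub_mul ρ h2 μ i j)).2, ← hScov]
    have hVij : ∀ i j, Integrable (fun p : (Fin n → ℝ) × (Fin n → ℝ) =>
        (p.2 i - μ₀ i) * (p.2 j - μ₀ j)) π := fun i j => (T2 _ (int_sub_mul ρ₀ h2₀ μ₀ i j)).1
    have hVval : ∀ i j, ∫ p, (p.2 i - μ₀ i) * (p.2 j - μ₀ j) ∂π = P₀ i j := fun i j => by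
      rw [(T2 _ (int_sub_mul ρ₀ h2₀ μ₀ i j)).2, ← hP₀cov]
    have hUi : ∀ i, Integrable (fun p : (Fin n → ℝ) × (Fin n → ℝ) => p.1 i - μ i) π :=
      fun i => (T1 _ (int_coord ρ h2 i)).1.sub (integrable_const _)
    have hUival : ∀ i, ∫ p, (p.1 i - μ i) ∂π = 0 := by
      intro i
      rw [integral_sub (T1 _ (int_coord ρ h2 i)).1 (integrable_const _),
        (T1 _ (int_coord ρ h2 i)).2, integral_const]
      simp [← hμ i]
    have hVi : ∀ i, Integrable (fun p : (Fin n → ℝ) × (Fin n → ℝ) => p.2 i - μ₀ i) π :=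
      fun i => (T2 _ (int_coord ρ₀ h2₀ i)).1.sub (integrable_const _)
    have hVival : ∀ i, ∫ p, (p.2 i - μ₀ i) ∂π = 0 := by
      intro i
      rw [integral_sub (T2 _ (int_coord ρ₀ h2₀ i)).1 (integrable_const _),
        (T2 _ (int_coord ρ₀ h2₀ i)).2, integral_const]
      simp [← hμ₀ i]
    -- assembled facts
    have eA1 : (fun p : (Fin n → ℝ) × (Fin n → ℝ) => (p.1 - μ) ⬝ᵥ (p.1 - μ))
        = fun p => ∑ i, (p.1 i - μ i) * (p.1 i - μ i) := by
      funext p; simp [dotProduct]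
    have hA1i : Integrable (fun p : (Fin n → ℝ) × (Fin n → ℝ) => (p.1 - μ) ⬝ᵥ (p.1 - μ)) π := by
      rw [eA1]; exact integrable_finset_sum _ (fun i _ => hUij i i)
    have hA1v : ∫ p, (p.1 - μ) ⬝ᵥ (p.1 - μ) ∂π = S.trace := by
      rw [eA1, integral_finset_sum _ (fun i _ => hUij i i)]
      simp only [hUval]
      rfl
    have eB1 : (fun p : (Fin n → ℝ) × (Fin n → ℝ) => (p.2 - μ₀) ⬝ᵥ (p.2 - μ₀))
        = fun p => ∑ i, (p.2 i - μ₀ i) * (p.2 i - μ₀ i) := by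
      funext p; simp [dotProduct]
    have hB1i : Integrable (fun p : (Fin n → ℝ) × (Fin n → ℝ) => (p.2 - μ₀) ⬝ᵥ (p.2 - μ₀)) π := by
      rw [eB1]; exact integrable_finset_sum _ (fun i _ => hVij i i)
    have hB1v : ∫ p, (p.2 - μ₀) ⬝ᵥ (p.2 - μ₀) ∂π = P₀.trace := by
      rw [eB1, integral_finset_sum _ (fun i _ => hVij i i)]
      simp only [hVval]
      rfl
    have eA2 : (fun p : (Fin n → ℝ) × (Fin n → ℝ) => (p.1 - μ) ⬝ᵥ (K *ᵥ (p.1 - μ)))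
        = fun p => ∑ i, ∑ j, K i j * ((p.1 i - μ i) * (p.1 j - μ j)) := by
      funext p
      simp only [dotProduct, mulVec, Pi.sub_apply, Finset.mul_sum, dotProduct]
      exact Finset.sum_congr rfl fun i _ => Finset.sum_congr rfl fun j _ => by ring
    have hA2i : Integrable (fun p : (Fin n → ℝ) × (Fin n → ℝ) =>
        (p.1 - μ) ⬝ᵥ (K *ᵥ (p.1 - μ))) π := by
      rw [eA2]
      exact integrable_finset_sum _ fun i _ =>
        integrable_finset_sum _ fun j _ => (hUij i j).const_mul _
    have hA2v : ∫ p, (p.1 - μ) ⬝ᵥ (K *ᵥ (p.1 - μ)) ∂π = (K * S).trace := by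
      rw [eA2, integral_finset_sum _ (fun i _ =>
        integrable_finset_sum _ fun j _ => (hUij i j).const_mul (K i j))]
      have : ∀ i : Fin n, ∫ p : (Fin n → ℝ) × (Fin n → ℝ),
          (∑ j, K i j * ((p.1 i - μ i) * (p.1 j - μ j))) ∂π = ∑ j, K i j * S i j := by
        intro i
        rw [integral_finset_sum _ (fun j _ => (hUij i j).const_mul (K i j))]
        exact Finset.sum_congr rfl fun j _ => by rw [integral_const_mul, hUval]
      simp only [this]
      simp only [Matrix.trace, Matrix.diag, Matrix.mul_apply]
      exact Finset.sum_congr rfl fun i _ => Finset.sum_congr rfl fun j _ => by rw [hSsymm i j]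
    have eB2 : (fun p : (Fin n → ℝ) × (Fin n → ℝ) => (p.2 - μ₀) ⬝ᵥ (K⁻¹ *ᵥ (p.2 - μ₀)))
        = fun p => ∑ i, ∑ j, K⁻¹ i j * ((p.2 i - μ₀ i) * (p.2 j - μ₀ j)) := by
      funext p
      simp only [dotProduct, mulVec, Pi.sub_apply, Finset.mul_sum, dotProduct]
      exact Finset.sum_congr rfl fun i _ => Finset.sum_congr rfl fun j _ => by ring
    have hB2i : Integrable (fun p : (Fin n → ℝ) × (Fin n → ℝ) =>
        (p.2 - μ₀) ⬝ᵥ (K⁻¹ *ᵥ (p.2 - μ₀))) π := by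
      rw [eB2]
      exact integrable_finset_sum _ fun i _ =>
        integrable_finset_sum _ fun j _ => (hVij i j).const_mul _
    have hB2v : ∫ p, (p.2 - μ₀) ⬝ᵥ (K⁻¹ *ᵥ (p.2 - μ₀)) ∂π = (K⁻¹ * P₀).trace := by
      rw [eB2, integral_finset_sum _ (fun i _ =>
        integrable_finset_sum _ fun j _ => (hVij i j).const_mul (K⁻¹ i j))]
      have : ∀ i : Fin n, ∫ p : (Fin n → ℝ) × (Fin n → ℝ),
          (∑ j, K⁻¹ i j * ((p.2 i - μ₀ i) * (p.2 j - μ₀ j))) ∂π = ∑ j, K⁻¹ i j * P₀ i j := by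
        intro i
        rw [integral_finset_sum _ (fun j _ => (hVij i j).const_mul (K⁻¹ i j))]
        exact Finset.sum_congr rfl fun j _ => by rw [integral_const_mul, hVval]
      simp only [this]
      simp only [Matrix.trace, Matrix.diag, Matrix.mul_apply]
      exact Finset.sum_congr rfl fun i _ => Finset.sum_congr rfl fun j _ => by rw [hPsymm i j]
    have eA5 : (fun p : (Fin n → ℝ) × (Fin n → ℝ) => (μ - μ₀) ⬝ᵥ (p.1 - μ))
        = fun p => ∑ i, (μ i - μ₀ i) * (p.1 i - μ i) := by
      funext p; simp [dotProduct]
    have hA5i : Integrable (fun p : (Fin n → ℝ) × (Fin n → ℝ) => (μ - μ₀) ⬝ᵥ (p.1 - μ)) π := by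
      rw [eA5]; exact integrable_finset_sum _ fun i _ => (hUi i).const_mul _
    have hA5v : ∫ p, (μ - μ₀) ⬝ᵥ (p.1 - μ) ∂π = 0 := by
      rw [eA5, integral_finset_sum _ (fun i _ => (hUi i).const_mul _)]
      simp [integral_const_mul, hUival]
    have eB5 : (fun p : (Fin n → ℝ) × (Fin n → ℝ) => (μ - μ₀) ⬝ᵥ (p.2 - μ₀))
        = fun p => ∑ i, (μ i - μ₀ i) * (p.2 i - μ₀ i) := by
      funext p; simp [dotProduct]
    have hB5i : Integrable (fun p : (Fin n → ℝ) × (Fin n → ℝ) => (μ - μ₀) ⬝ᵥ (p.2 - μ₀)) π := by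
      rw [eB5]; exact integrable_finset_sum _ fun i _ => (hVi i).const_mul _
    have hB5v : ∫ p, (μ - μ₀) ⬝ᵥ (p.2 - μ₀) ∂π = 0 := by
      rw [eB5, integral_finset_sum _ (fun i _ => (hVi i).const_mul _)]
      simp [integral_const_mul, hVival]
    -- integrability of the cost
    have hIF : Integrable (fun p : (Fin n → ℝ) × (Fin n → ℝ) => (p.1 - p.2) ⬝ᵥ (p.1 - p.2)) π := by
      have eF : (fun p : (Fin n → ℝ) × (Fin n → ℝ) => (p.1 - p.2) ⬝ᵥ (p.1 - p.2))
          = fun p => ∑ i, (p.1 i - p.2 i) * (p.1 i - p.2 i) := by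
        funext p; simp [dotProduct]
      rw [eF]
      refine Integrable.mono' (((T1 _ h2).1.const_mul 2).add ((T2 _ h2₀).1.const_mul 2))
        ?_ (Filter.Eventually.of_forall fun p => ?_)
      · refine (Continuous.aestronglyMeasurable ?_)
        exact continuous_finset_sum _ fun i _ =>
          (((continuous_apply i).comp continuous_fst).sub
            ((continuous_apply i).comp continuous_snd)).mul
          (((continuous_apply i).comp continuous_fst).sub
            ((continuous_apply i).comp continuous_snd))
      · simp only [Pi.add_apply]
        rw [Real.norm_eq_abs, abs_of_nonneg (Finset.sum_nonneg fun i _ => mul_self_nonneg _)]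
        have h1 : p.1 ⬝ᵥ p.1 = ∑ i, p.1 i * p.1 i := rfl
        have h2' : p.2 ⬝ᵥ p.2 = ∑ i, p.2 i * p.2 i := rfl
        rw [h1, h2', Finset.mul_sum, Finset.mul_sum, ← Finset.sum_add_distrib]
        exact Finset.sum_le_sum fun i _ => by nlinarith [sq_nonneg (p.1 i + p.2 i)]
    -- pointwise bound
    have hpt : ∀ p : (Fin n → ℝ) × (Fin n → ℝ),
        ((p.1 - μ) ⬝ᵥ (p.1 - μ) - (p.1 - μ) ⬝ᵥ (K *ᵥ (p.1 - μ)))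
        + ((p.2 - μ₀) ⬝ᵥ (p.2 - μ₀) - (p.2 - μ₀) ⬝ᵥ (K⁻¹ *ᵥ (p.2 - μ₀)))
        + 2 * ((μ - μ₀) ⬝ᵥ (p.1 - μ)) - 2 * ((μ - μ₀) ⬝ᵥ (p.2 - μ₀)) + (μ - μ₀) ⬝ᵥ (μ - μ₀)
        ≤ (p.1 - p.2) ⬝ᵥ (p.1 - p.2) := by
      intro p
      have h0 : p.1 - p.2 = (p.1 - μ) - (p.2 - μ₀) + (μ - μ₀) := by abel
      rw [h0]
      exact pt_ineq hKpd (p.1 - μ) (p.2 - μ₀) (μ - μ₀)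
    -- integrability of minorant
    have hIg : Integrable (fun p : (Fin n → ℝ) × (Fin n → ℝ) =>
        ((p.1 - μ) ⬝ᵥ (p.1 - μ) - (p.1 - μ) ⬝ᵥ (K *ᵥ (p.1 - μ)))
        + ((p.2 - μ₀) ⬝ᵥ (p.2 - μ₀) - (p.2 - μ₀) ⬝ᵥ (K⁻¹ *ᵥ (p.2 - μ₀)))
        + 2 * ((μ - μ₀) ⬝ᵥ (p.1 - μ)) - 2 * ((μ - μ₀) ⬝ᵥ (p.2 - μ₀)) + (μ - μ₀) ⬝ᵥ (μ - μ₀)) π :=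
      (((((hA1i.sub hA2i).add (hB1i.sub hB2i)).add (hA5i.const_mul 2)).sub
        (hB5i.const_mul 2)).add (integrable_const _))
    have hI1 : Integrable (fun p : (Fin n → ℝ) × (Fin n → ℝ) =>
        (p.1 - μ) ⬝ᵥ (p.1 - μ) - (p.1 - μ) ⬝ᵥ (K *ᵥ (p.1 - μ))) π := hA1i.sub hA2i
    have hI2 : Integrable (fun p : (Fin n → ℝ) × (Fin n → ℝ) =>
        (p.2 - μ₀) ⬝ᵥ (p.2 - μ₀) - (p.2 - μ₀) ⬝ᵥ (K⁻¹ *ᵥ (p.2 - μ₀))) π := hB1i.sub hB2i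
    have hI3 : Integrable (fun p : (Fin n → ℝ) × (Fin n → ℝ) =>
        ((p.1 - μ) ⬝ᵥ (p.1 - μ) - (p.1 - μ) ⬝ᵥ (K *ᵥ (p.1 - μ)))
        + ((p.2 - μ₀) ⬝ᵥ (p.2 - μ₀) - (p.2 - μ₀) ⬝ᵥ (K⁻¹ *ᵥ (p.2 - μ₀)))) π := hI1.add hI2
    have hI5 : Integrable (fun p : (Fin n → ℝ) × (Fin n → ℝ) => 2 * ((μ - μ₀) ⬝ᵥ (p.1 - μ))) π :=
      hA5i.const_mul 2
    have hI6 : Integrable (fun p : (Fin n → ℝ) × (Fin n → ℝ) => 2 * ((μ - μ₀) ⬝ᵥ (p.2 - μ₀))) π :=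
      hB5i.const_mul 2
    have hI4 : Integrable (fun p : (Fin n → ℝ) × (Fin n → ℝ) =>
        ((p.1 - μ) ⬝ᵥ (p.1 - μ) - (p.1 - μ) ⬝ᵥ (K *ᵥ (p.1 - μ)))
        + ((p.2 - μ₀) ⬝ᵥ (p.2 - μ₀) - (p.2 - μ₀) ⬝ᵥ (K⁻¹ *ᵥ (p.2 - μ₀)))
        + 2 * ((μ - μ₀) ⬝ᵥ (p.1 - μ))) π := hI3.add hI5
    have hI7 : Integrable (fun p : (Fin n → ℝ) × (Fin n → ℝ) =>
        ((p.1 - μ) ⬝ᵥ (p.1 - μ) - (p.1 - μ) ⬝ᵥ (K *ᵥ (p.1 - μ)))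
        + ((p.2 - μ₀) ⬝ᵥ (p.2 - μ₀) - (p.2 - μ₀) ⬝ᵥ (K⁻¹ *ᵥ (p.2 - μ₀)))
        + 2 * ((μ - μ₀) ⬝ᵥ (p.1 - μ)) - 2 * ((μ - μ₀) ⬝ᵥ (p.2 - μ₀))) π := hI4.sub hI6
    have hgval : ∫ p, (((p.1 - μ) ⬝ᵥ (p.1 - μ) - (p.1 - μ) ⬝ᵥ (K *ᵥ (p.1 - μ)))
        + ((p.2 - μ₀) ⬝ᵥ (p.2 - μ₀) - (p.2 - μ₀) ⬝ᵥ (K⁻¹ *ᵥ (p.2 - μ₀)))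
        + 2 * ((μ - μ₀) ⬝ᵥ (p.1 - μ)) - 2 * ((μ - μ₀) ⬝ᵥ (p.2 - μ₀)) + (μ - μ₀) ⬝ᵥ (μ - μ₀)) ∂π
        = (S.trace - (K * S).trace) + (P₀.trace - (K⁻¹ * P₀).trace) + (μ - μ₀) ⬝ᵥ (μ - μ₀) := by
      rw [integral_add hI7 (integrable_const _), integral_sub hI4 hI6, integral_add hI3 hI5,
        integral_add hI1 hI2, integral_sub hA1i hA2i, integral_sub hB1i hB2i,
        integral_const_mul, integral_const_mul, hA1v, hA2v, hB1v, hB2v, hA5v, hB5v, integral_const]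
      simp
    have hmono := integral_mono hIg hIF hpt
    rw [hgval] at hmono
    have htrace : (S + P₀ - (2 : ℝ) • hmid.sqrt).trace
        = (S.trace - (K * S).trace) + (P₀.trace - (K⁻¹ * P₀).trace) := by
      rw [Matrix.trace_sub, Matrix.trace_add, Matrix.trace_smul, htr1, htr2, smul_eq_mul]
      ring
    rw [htrace]
    linarith
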